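/- arXiv:2310.04398 — 2 statements merged into one kernel-verified Lean document; each statement's English description precedes it below -/
import Mathlib

section
/- Let e1 ≥ e2 > 1 be integers with gcd(e1+1, e2−1) = 1. Then for every integer n with n ≥ max{(e1+1)(e1+e2)/e1, (e2−1)(e1+e2)/e2}, there exist nonnegative integers x, y, z satisfying e1·x − e2·y − z = 0 and x + y + z = n. -/
theorem stmt_6 (e1 e2 n : ℤ) (he2 : 1 < e2) (he : e2 ≤ e1)
    (hg : Int.gcd (e1 + 1) (e2 - 1) = 1)
    (hn : max (((e1 : ℚ) + 1) * (e1 + e2) / e1) (((e2 : ℚ) - 1) * (e1 + e2) / e2) ≤ (n : ℚ)) :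
    ∃ x y z : ℤ, 0 ≤ x ∧ 0 ≤ y ∧ 0 ≤ z ∧
      e1 * x - e2 * y - z = 0 ∧ x + y + z = n := by
  have ha0 : (0:ℤ) < e1 + 1 := by omega
  -- key inequality from hn
  have h1 : ((e1:ℚ) + 1) * (e1 + e2) / e1 ≤ (n:ℚ) := le_trans (le_max_left _ _) hn
  have he1q : (0:ℚ) < (e1:ℚ) := by exact_mod_cast (by omega : (0:ℤ) < e1)
  have h2 : ((e1:ℚ) + 1) * (e1 + e2) ≤ (n:ℚ) * e1 := (div_le_iff₀ he1q).mp h1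
  have hkey : (e1 + 1) * (e1 + e2) ≤ n * e1 := by exact_mod_cast h2
  have hn0 : 0 ≤ n := by nlinarith
  -- Bezout
  obtain ⟨u, v, huv⟩ : ∃ u v, (e1 + 1) * u + (e2 - 1) * v = 1 := by
    have h := Int.gcd_eq_gcd_ab (e1 + 1) (e2 - 1)
    rw [hg] at h
    push_cast at h
    exact ⟨_, _, h.symm⟩
  set y : ℤ := (-n * v) % (e1 + 1) with hy
  have hy0 : 0 ≤ y := Int.emod_nonneg _ (by omega)
  have hylt : y < e1 + 1 := Int.emod_lt_of_pos _ ha0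
  have hd : (e1 + 1) ∣ n + (e2 - 1) * y := by
    have hmod : y ≡ -n * v [ZMOD (e1 + 1)] :=
      (Int.emod_emod_of_dvd _ dvd_rfl : y % (e1+1) = (-n*v) % (e1+1))
    have h3 : n + (e2 - 1) * y ≡ n + (e2 - 1) * (-n * v) [ZMOD (e1 + 1)] :=
      (Int.ModEq.refl n).add (hmod.mul_left _)
    have h4 : n + (e2 - 1) * (-n * v) = (e1 + 1) * (n * u) := by linear_combination (-n) * huv
    rw [h4] at h3
    have h5 : n + (e2 - 1) * y ≡ 0 [ZMOD (e1 + 1)] :=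
      h3.trans (Int.modEq_zero_iff_dvd.mpr ⟨n * u, rfl⟩)
    exact Int.modEq_zero_iff_dvd.mp h5
  set x : ℤ := (n + (e2 - 1) * y) / (e1 + 1) with hx
  have hax : (e1 + 1) * x = n + (e2 - 1) * y := Int.mul_ediv_cancel' hd
  have hx0 : 0 ≤ x := Int.ediv_nonneg
    (by nlinarith [mul_nonneg (show (0:ℤ) ≤ e2 - 1 by omega) hy0]) (le_of_lt ha0)
  refine ⟨x, y, e1 * x - e2 * y, hx0, hy0, ?_, by ring, by linarith⟩
  have hza : (e1 + 1) * (e1 * x - e2 * y) = e1 * n - (e1 + e2) * y := by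
    linear_combination e1 * hax
  have hyle : y ≤ e1 := by omega
  nlinarith [hza, hkey, mul_le_mul_of_nonneg_left hyle (show (0:ℤ) ≤ e1 + e2 by omega)]
end

section
/- Let e1 ≥ e2 > 1 be integers with d = gcd(e1+1, e2−1). For all sufficiently large multiples n of d, there exist nonnegative integers x, y, z with e1·x − e2·y − z = 0 and x + y + z = n. -/
theorem stmt_10 (e1 e2 : ℤ) (he2 : 1 < e2) (he : e2 ≤ e1) :
    ∃ N : ℤ, ∀ n : ℤ, N ≤ n → (Int.gcd (e1 + 1) (e2 - 1) : ℤ) ∣ n →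
      ∃ x y z : ℤ, 0 ≤ x ∧ 0 ≤ y ∧ 0 ≤ z ∧
        e1 * x - e2 * y - z = 0 ∧ x + y + z = n := by
  refine ⟨e1 + e2, fun n hn hdvd => ?_⟩
  obtain ⟨k, hk⟩ := hdvd
  set a := (e1 + 1 : ℤ)
  set b := (e2 - 1 : ℤ)
  have hbez : (Int.gcd a b : ℤ) = a * Int.gcdA a b + b * Int.gcdB a b :=
    Int.gcd_eq_gcd_ab a b
  set x0 : ℤ := Int.gcdA a b * k
  set y0 : ℤ := -(Int.gcdB a b * k)
  have hxy0 : a * x0 - b * y0 = n := by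
    rw [hk, hbez]; ring
  have ha : 0 < a := by simp only [a]; linarith
  set t : ℤ := y0 / a
  set y : ℤ := y0 % a
  have hy0 : 0 ≤ y := Int.emod_nonneg y0 (by linarith)
  have hylt : y < a := Int.emod_lt_of_pos y0 ha
  have hyeq : y = y0 - a * t := Int.emod_def y0 a
  set x : ℤ := x0 - t * b
  have hmain : a * x - b * y = n := by
    rw [hyeq]; simp only [x]; linear_combination hxy0
  set z : ℤ := e1 * x - e2 * y
  have hmain' : (e1 + 1) * x - (e2 - 1) * y = n := hmain
  have hylt' : y < e1 + 1 := hylt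
  have hx : 0 ≤ x := by nlinarith
  have hz : 0 ≤ z := by
    have h1 : (e1 + 1) * z = e1 * n - (e1 + e2) * y := by
      simp only [z]; linear_combination e1 * hmain'
    nlinarith
  refine ⟨x, y, z, hx, hy0, hz, by ring, ?_⟩
  have hzdef : z = e1 * x - e2 * y := rfl
  linarith
end
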